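/- Let X be a connected, locally finite simple graph with vertex set V and graph distance d, let ℓ : ℤ → V be a bi-infinite geodesic, and let m ∈ ℕ be such that for every x ∈ V there exists i ∈ ℤ with d(x, ℓ(i)) ≤ m. If A ⊆ V is infinite, its complement V \ A is infinite, and its boundary ∂A is finite, then A contains exactly one end of ℓ: exactly one of the following holds — (there exists N with ℓ(i) ∈ A for all i ≥ N) or (there exists N with ℓ(i) ∈ A for all i ≤ −N). -/

import Mathlib

private lemma finBall {V : Type*} (X : SimpleGraph V) (hconn : X.Connected)
    (hlf : ∀ v : V, (X.neighborSet v).Finite) :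
    ∀ (m : ℕ) (v : V), {x : V | X.dist v x ≤ m}.Finite := by
  intro m
  induction m with
  | zero =>
    intro v
    apply Set.Finite.subset (Set.finite_singleton v)
    intro x hx
    simp only [Set.mem_setOf_eq, Nat.le_zero] at hx
    simp [((hconn.dist_eq_zero_iff).mp hx).symm]
  | succ n ih =>
    intro v
    have hsub : {x : V | X.dist v x ≤ n + 1} ⊆
        {v} ∪ ⋃ w ∈ X.neighborSet v, {x : V | X.dist w x ≤ n} := by
      intro x hx
      simp only [Set.mem_setOf_eq] at hx
      by_cases hvx : X.dist v x = 0
      · left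
        simp [((hconn.dist_eq_zero_iff).mp hvx)]
      · right
        obtain ⟨p, hp⟩ := (hconn x v).symm.exists_walk_length_eq_dist
        cases p with
        | nil => simp at hvx
        | @cons _ w _ h q =>
          simp only [SimpleGraph.Walk.length_cons] at hp
          have hq : X.dist w x ≤ n := by
            have := X.dist_le q
            omega
          exact Set.mem_biUnion h hq
    exact Set.Finite.subset ((Set.finite_singleton v).union
      (Set.Finite.biUnion (hlf v) (fun w _ => ih w))) hsub

private lemma crossWalk {V : Type*} (X : SimpleGraph V) (hconn : X.Connected)
    (A : Set V) : ∀ {x y : V} (p : X.Walk x y), x ∉ A → y ∈ A →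
    ∃ b ∈ {x ∈ A | ∃ y ∉ A, X.Adj x y}, X.dist x b ≤ p.length := by
  intro x y p
  induction p with
  | nil => intro hx hy; exact absurd hy hx
  | @cons a w _ h q ih =>
    intro hx hy
    by_cases hw : w ∈ A
    · refine ⟨w, ⟨hw, a, hx, h.symm⟩, ?_⟩
      have : X.dist a w ≤ 1 := by
        rw [SimpleGraph.dist_eq_one_iff_adj.mpr h]
      simp only [SimpleGraph.Walk.length_cons]
      omega
    · obtain ⟨b, hb, hd⟩ := ih hw hy
      refine ⟨b, hb, ?_⟩
      have ht := hconn.dist_triangle (u := a) (v := w) (w := b)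
      have h1 : X.dist a w ≤ 1 := by rw [SimpleGraph.dist_eq_one_iff_adj.mpr h]
      simp only [SimpleGraph.Walk.length_cons]
      omega

/-- In a connected, locally finite simple graph with a bi-infinite geodesic
`ℓ` such that every vertex is within distance `m` of `ℓ`, a set `A` with infinite
complement which is itself infinite and has finite boundary contains exactly one end
of `ℓ`. -/
theorem coinfinite_set_contains_exactly_one_end {V : Type*} (X : SimpleGraph V)
    (hconn : X.Connected) (hlf : ∀ v : V, (X.neighborSet v).Finite)
    (ℓ : ℤ → V) (hgeo : ∀ i j : ℤ, (X.dist (ℓ i) (ℓ j) : ℤ) = |i - j|)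
    (m : ℕ) (hm : ∀ x : V, ∃ i : ℤ, X.dist x (ℓ i) ≤ m)
    (A : Set V) (hA : A.Infinite) (hAc : (Aᶜ : Set V).Infinite)
    (hbd : {x ∈ A | ∃ y ∉ A, X.Adj x y}.Finite) :
    Xor' (∃ N : ℤ, ∀ i ≥ N, ℓ i ∈ A) (∃ N : ℤ, ∀ i ≤ -N, ℓ i ∈ A) := by
  classical
  -- injectivity of ℓ
  have hinj : Function.Injective ℓ := by
    intro i j hij
    have := hgeo i j
    rw [hij] at this
    simp only [SimpleGraph.dist_self, Nat.cast_zero] at this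
    have := abs_eq_zero.mp this.symm
    omega
  -- adjacency along ℓ
  have hadj : ∀ i : ℤ, X.Adj (ℓ i) (ℓ (i + 1)) := by
    intro i
    apply SimpleGraph.dist_eq_one_iff_adj.mp
    have := hgeo i (i + 1)
    have h1 : |i - (i + 1)| = 1 := by
      rw [show i - (i + 1) = -1 by ring]
      norm_num
    rw [h1] at this
    exact_mod_cast this
  -- boundary of complement is finite
  set B := {x ∈ A | ∃ y ∉ A, X.Adj x y} with hB
  have hBc : {x : V | x ∉ A ∧ ∃ y ∈ A, X.Adj x y}.Finite := by
    apply Set.Finite.subset (Set.Finite.biUnion hbd (fun b _ => hlf b))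
    rintro x ⟨hx, y, hy, hxy⟩
    exact Set.mem_biUnion (⟨hy, x, hx, hxy.symm⟩ : y ∈ B) hxy.symm
  -- crossing set is finite
  set S := {i : ℤ | ¬ (ℓ i ∈ A ↔ ℓ (i + 1) ∈ A)} with hS
  have hSfin : S.Finite := by
    have himg : ℓ '' S ⊆ B ∪ {x : V | x ∉ A ∧ ∃ y ∈ A, X.Adj x y} := by
      rintro _ ⟨i, hi, rfl⟩
      simp only [hS, Set.mem_setOf_eq] at hi
      by_cases h : ℓ i ∈ A
      · exact Or.inl ⟨h, ℓ (i + 1), fun hc => hi ⟨fun _ => hc, fun _ => h⟩, hadj i⟩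
      · exact Or.inr ⟨h, ℓ (i + 1), by tauto, hadj i⟩
    exact Set.Finite.of_finite_image
      (Set.Finite.subset (hbd.union hBc) himg) (hinj.injOn)
  -- bound on crossings
  obtain ⟨a, ha⟩ := hSfin.bddAbove
  obtain ⟨b, hb⟩ := hSfin.bddBelow
  set M : ℤ := max a (-b) with hM
  have hnS : ∀ i : ℤ, (M < i ∨ i < -M) → (ℓ i ∈ A ↔ ℓ (i + 1) ∈ A) := by
    intro i hi
    by_contra hc
    have hi1 : i ∈ S := hc
    have h1 := ha hi1
    have h2 := hb hi1
    omega
  -- tail constancy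
  have hup : ∀ i ≥ M + 1, (ℓ i ∈ A ↔ ℓ (M + 1) ∈ A) := fun i hi =>
    Int.le_induction (motive := fun j _ => (ℓ j ∈ A ↔ ℓ (M + 1) ∈ A)) Iff.rfl
      (fun n hn ihn => by show ℓ (n+1) ∈ A ↔ _; rw [← (hnS n (by omega))]; exact ihn) i hi
  have hdown : ∀ i ≤ -(M + 1), (ℓ i ∈ A ↔ ℓ (-(M + 1)) ∈ A) := fun i hi =>
    Int.le_induction_down (motive := fun j _ => (ℓ j ∈ A ↔ ℓ (-(M + 1)) ∈ A)) Iff.rfl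
      (fun n hn ihn => by
        have h := hnS (n - 1) (by omega)
        rw [sub_add_cancel] at h
        show ℓ (n-1) ∈ A ↔ _
        rw [h]; exact ihn) i hi
  -- key finiteness argument
  have hmain : ∀ (C : Set V), (∀ x ∈ C, x ∉ A → False) = False →
      True := by intro _ _; trivial
  -- the big finite set
  set K : Set V := B ∪ ℓ '' (Set.Icc (-(M + 1)) (M + 1)) with hK
  have hKfin : K.Finite := hbd.union ((Set.finite_Icc _ _).image ℓ)
  have hBig : (⋃ b ∈ K, {x : V | X.dist b x ≤ 2 * m}).Finite :=
    Set.Finite.biUnion hKfin (fun b _ => finBall X hconn hlf (2 * m) b)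
  -- Case: both tails in A leads to contradiction with Aᶜ infinite
  have case1 : ℓ (M + 1) ∈ A → ℓ (-(M + 1)) ∈ A → False := by
    intro hp hq
    apply hAc
    apply Set.Finite.subset hBig
    intro x hx
    obtain ⟨i, hi⟩ := hm x
    by_cases hir : -(M + 1) ≤ i ∧ i ≤ M + 1
    · refine Set.mem_biUnion (Or.inr ⟨i, ⟨hir.1, hir.2⟩, rfl⟩) ?_
      rw [Set.mem_setOf_eq, SimpleGraph.dist_comm]
      omega
    · have hiA : ℓ i ∈ A := by
        rcases (by omega : M + 1 ≤ i ∨ i ≤ -(M + 1)) with h | h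
        · exact (hup i h).mpr hp
        · exact (hdown i h).mpr hq
      obtain ⟨p, hp'⟩ := (hconn x (ℓ i)).exists_walk_length_eq_dist
      obtain ⟨c, hc, hdc⟩ := crossWalk X hconn A p hx hiA
      refine Set.mem_biUnion (Or.inl hc) ?_
      rw [Set.mem_setOf_eq, SimpleGraph.dist_comm]
      omega
  -- Case: both tails outside A leads to contradiction with A infinite
  have case2 : ℓ (M + 1) ∉ A → ℓ (-(M + 1)) ∉ A → False := by
    intro hp hq
    apply hA
    apply Set.Finite.subset hBig
    intro x hx
    obtain ⟨i, hi⟩ := hm x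
    by_cases hir : -(M + 1) ≤ i ∧ i ≤ M + 1
    · refine Set.mem_biUnion (Or.inr ⟨i, ⟨hir.1, hir.2⟩, rfl⟩) ?_
      rw [Set.mem_setOf_eq, SimpleGraph.dist_comm]
      omega
    · have hiA : ℓ i ∉ A := by
        rcases (by omega : M + 1 ≤ i ∨ i ≤ -(M + 1)) with h | h
        · exact fun hc => hp ((hup i h).mp hc)
        · exact fun hc => hq ((hdown i h).mp hc)
      obtain ⟨p, hp'⟩ := (hconn (ℓ i) x).exists_walk_length_eq_dist
      obtain ⟨c, hc, hdc⟩ := crossWalk X hconn A p hiA hx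
      refine Set.mem_biUnion (Or.inl hc) ?_
      have ht := hconn.dist_triangle (u := c) (v := ℓ i) (w := x)
      have h1 : X.dist c (ℓ i) = X.dist (ℓ i) c := SimpleGraph.dist_comm ..
      have h2 : X.dist (ℓ i) x = X.dist x (ℓ i) := SimpleGraph.dist_comm ..
      rw [Set.mem_setOf_eq]
      omega
  by_cases hp : ℓ (M + 1) ∈ A
  · -- positive tail in A; by case1 the negative tail is not in A
    have hq : ℓ (-(M + 1)) ∉ A := fun hq => case1 hp hq
    left
    constructor
    · exact ⟨M + 1, fun i hi => (hup i hi).mpr hp⟩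
    · rintro ⟨N, hN⟩
      apply hq
      have h1 : min (-(M + 1)) (-N) ≤ -N := min_le_right _ _
      have h2 : min (-(M + 1)) (-N) ≤ -(M + 1) := min_le_left _ _
      exact (hdown _ h2).mp (hN _ h1)
  · have hq : ℓ (-(M + 1)) ∈ A := by
      by_contra hq
      exact case2 hp hq
    right
    constructor
    · exact ⟨M + 1, fun i hi => (hdown i hi).mpr hq⟩
    · rintro ⟨N, hN⟩
      apply hp
      have h1 : max (M + 1) N ≥ N := le_max_right _ _
      have h2 : max (M + 1) N ≥ M + 1 := le_max_left _ _
      exact (hup _ h2).mp (hN _ h1)
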